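/- Let M be a globally hyperbolic spacetime, P ⊆ M a past compact subset (i.e. J⁻(x) ∩ P is contained in a compact set for every x ∈ M), and K ⊆ M compact. Then J⁻(K) ∩ P is contained in a compact set. -/
import Mathlib


/-- Abstract causal structure of a (globally hyperbolic) spacetime:
`ll` is the chronological relation `x ≪ y`, `le` the causal relation. -/
structure Spacetime (M : Type*) where
  ll : M → M → Prop
  le : M → M → Prop

namespace Spacetime

variable {M : Type*}

/-- Chronological past `I⁻(A)`. -/
def Iminus (S : Spacetime M) (A : Set M) : Set M := {x | ∃ y ∈ A, S.ll x y}

/-- Causal past `J⁻(A)`. -/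
def Jminus (S : Spacetime M) (A : Set M) : Set M := {x | ∃ y ∈ A, S.le x y}

end Spacetime

/-- In a globally hyperbolic spacetime (encoded by the listed
properties of the chronological and causal pasts), if `P` is past compact
(`J⁻(x) ∩ P` is contained in a compact set for every `x`) and `K` is compact,
then `J⁻(K) ∩ P` is contained in a compact set. -/
theorem timeslice_stmt0 {M : Type*} [TopologicalSpace M] (S : Spacetime M)
    (hllle : ∀ x y, S.ll x y → S.le x y)
    (hlltrans : ∀ x y z, S.ll x y → S.ll y z → S.ll x z)
    (hIopen : ∀ y : M, IsOpen (S.Iminus {y}))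
    (hJclosed : ∀ y : M, IsClosed (S.Jminus {y}))
    (hJclI : ∀ A : Set M, S.Jminus A ⊆ closure (S.Iminus A))
    (hCauchy : ∀ K : Set M, IsCompact K → ∃ Sig : Set M, K ⊆ S.Iminus Sig)
    (P K : Set M)
    (hP : ∀ x : M, ∃ C : Set M, IsCompact C ∧ S.Jminus {x} ∩ P ⊆ C)
    (hK : IsCompact K) :
    ∃ C : Set M, IsCompact C ∧ S.Jminus K ∩ P ⊆ C := by
  obtain ⟨Sig, hSig⟩ := hCauchy K hK
  -- cover K by open sets I⁻({y}), y ∈ Sig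
  obtain ⟨t, ht⟩ := hK.elim_finite_subcover (fun y : Sig => S.Iminus {y.1})
    (fun y => hIopen y.1)
    (by
      intro k hk
      obtain ⟨y, hy, hll⟩ := hSig hk
      exact Set.mem_iUnion.2 ⟨⟨y, hy⟩, ⟨y, rfl, hll⟩⟩)
  choose C hCcomp hCsub using hP
  refine ⟨⋃ y ∈ t, C y.1, t.isCompact_biUnion (fun y _ => hCcomp y.1), ?_⟩
  rintro x ⟨⟨k, hkK, hle⟩, hxP⟩
  obtain ⟨y, hyt, hky⟩ := Set.mem_iUnion₂.1 (ht hkK)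
  obtain ⟨y', hy', hll⟩ := hky
  rcases hy' with rfl
  -- x ∈ J⁻({k}) ⊆ closure I⁻({k}) ⊆ closure I⁻({y}) ⊆ J⁻({y})
  have h1 : x ∈ closure (S.Iminus {k}) := hJclI {k} ⟨k, rfl, hle⟩
  have h2 : S.Iminus {k} ⊆ S.Iminus {(y : M)} := by
    rintro z ⟨k', hk', hz⟩
    rcases hk' with rfl
    exact ⟨y, rfl, hlltrans z k' y hz hll⟩
  have h3 : closure (S.Iminus {(y : M)}) ⊆ S.Jminus {(y : M)} := by
    refine (hJclosed y.1).closure_subset_iff.2 ?_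
    rintro z ⟨y', hy', hz⟩
    exact ⟨y', hy', hllle z y' hz⟩
  have hx : x ∈ S.Jminus {(y : M)} := h3 ((closure_mono h2) h1)
  exact Set.mem_biUnion hyt (hCsub y.1 ⟨hx, hxP⟩)
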